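/- With notation as above (basis x₁,…,x_r of L over K with Gram matrix E_{n,r−n}, map α determined by the matrix z, λ_i = x_{n+i}⊗1 − Σ_k x_k⊗z_{ki} spanning Ker α): the restriction of −H_{L,C} to Ker α is positive definite if and only if Eₙ − z z̄ᵗ is positive definite Hermitian, i.e. if and only if z lies in the Siegel domain H³_{n,r−n}. -/

import Mathlib

open Complex
open scoped ComplexOrder

open Matrix in
lemma my_dot_star_self {ι : Type*} [Fintype ι] (u : ι → ℂ) :
    star u ⬝ᵥ u = ((∑ i, Complex.normSq (u i) : ℝ) : ℂ) := by
  simp only [dotProduct, Pi.star_apply, Complex.ofReal_sum]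
  exact Finset.sum_congr rfl fun i _ => (Complex.normSq_eq_conj_mul_self).symm ▸ rfl

lemma my_energy_pos {ι : Type*} [Fintype ι] {u : ι → ℂ} (hu : u ≠ 0) :
    0 < ∑ i, Complex.normSq (u i) := by
  obtain ⟨i, hi⟩ := Function.ne_iff.mp hu
  exact Finset.sum_pos' (fun j _ => Complex.normSq_nonneg _)
    ⟨i, Finset.mem_univ i, Complex.normSq_pos.mpr hi⟩

open Matrix in
lemma my_cauchy {ι : Type*} [Fintype ι] (x w : ι → ℂ) :
    ‖star x ⬝ᵥ w‖ ≤
      Real.sqrt (∑ i, Complex.normSq (x i)) * Real.sqrt (∑ i, Complex.normSq (w i)) := by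
  calc ‖star x ⬝ᵥ w‖ ≤ ∑ i, ‖star (x i) * w i‖ :=
        norm_sum_le _ _
    _ = ∑ i, ‖x i‖ * ‖w i‖ := by
        simp [_root_.map_mul]
    _ ≤ _ := by
        have := Real.sum_mul_le_sqrt_mul_sqrt Finset.univ
          (fun i => ‖x i‖) (fun i => ‖w i‖)
        simpa [Complex.sq_norm] using this

open Matrix in
/-- transfer: contractivity of `A` implies contractivity of `Aᴴ`. -/
lemma my_transfer {p q : ℕ} (A : Matrix (Fin p) (Fin q) ℂ)
    (h : ∀ v : Fin q → ℂ, v ≠ 0 → ∑ i, Complex.normSq ((A *ᵥ v) i) < ∑ i, Complex.normSq (v i)) :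
    ∀ x : Fin p → ℂ, x ≠ 0 → ∑ i, Complex.normSq ((Aᴴ *ᵥ x) i) < ∑ i, Complex.normSq (x i) := by
  intro x hx
  set y := Aᴴ *ᵥ x with hy
  by_cases h0 : y = 0
  · rw [h0]
    simpa using my_energy_pos hx
  · have key : ((∑ i, Complex.normSq (y i) : ℝ) : ℂ) = star x ⬝ᵥ (A *ᵥ y) := by
      rw [← my_dot_star_self, hy, star_mulVec, conjTranspose_conjTranspose,
        ← dotProduct_mulVec]
    have hAy := h y h0
    have hey : 0 < ∑ i, Complex.normSq (y i) := my_energy_pos h0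
    have habs : (∑ i, Complex.normSq (y i)) ≤ ‖star x ⬝ᵥ (A *ᵥ y)‖ := by
      rw [← key]
      rw [Complex.norm_real, Real.norm_eq_abs]
      exact le_abs_self _
    have hcs := my_cauchy x (A *ᵥ y)
    have step : (∑ i, Complex.normSq (y i)) <
        Real.sqrt (∑ i, Complex.normSq (x i)) * Real.sqrt (∑ i, Complex.normSq (y i)) := by
      refine lt_of_le_of_lt (habs.trans hcs) ?_
      have hxpos : 0 < Real.sqrt (∑ i, Complex.normSq (x i)) :=
        Real.sqrt_pos.mpr (my_energy_pos hx)
      exact mul_lt_mul_of_pos_left (Real.sqrt_lt_sqrt (Finset.sum_nonneg fun _ _ =>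
        Complex.normSq_nonneg _) hAy) hxpos
    have hsy : Real.sqrt (∑ i, Complex.normSq (y i)) * Real.sqrt (∑ i, Complex.normSq (y i))
        = ∑ i, Complex.normSq (y i) := Real.mul_self_sqrt hey.le
    have h2 : Real.sqrt (∑ i, Complex.normSq (y i)) < Real.sqrt (∑ i, Complex.normSq (x i)) := by
      have hsp : 0 < Real.sqrt (∑ i, Complex.normSq (y i)) := Real.sqrt_pos.mpr hey
      nlinarith [step, hsy]
    calc ∑ i, Complex.normSq (y i)
        = Real.sqrt (∑ i, Complex.normSq (y i)) ^ 2 := by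
          rw [Real.sq_sqrt hey.le]
      _ < Real.sqrt (∑ i, Complex.normSq (x i)) ^ 2 := by
          apply pow_lt_pow_left₀ h2 (Real.sqrt_nonneg _) (by norm_num)
      _ = ∑ i, Complex.normSq (x i) := Real.sq_sqrt (Finset.sum_nonneg fun _ _ =>
          Complex.normSq_nonneg _)

open Matrix in
lemma my_posdef_iff {p q : ℕ} (A : Matrix (Fin p) (Fin q) ℂ) :
    (1 - Aᴴ * A).PosDef ↔
      ∀ v : Fin q → ℂ, v ≠ 0 →
        ∑ i, Complex.normSq ((A *ᵥ v) i) < ∑ i, Complex.normSq (v i) := by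
  have hherm : (1 - Aᴴ * A).IsHermitian :=
    Matrix.isHermitian_one.sub (Matrix.isHermitian_conjTranspose_mul_self A)
  have hform : ∀ v : Fin q → ℂ, star v ⬝ᵥ ((1 - Aᴴ * A) *ᵥ v) =
      (((∑ i, Complex.normSq (v i)) - ∑ i, Complex.normSq ((A *ᵥ v) i) : ℝ) : ℂ) := by
    intro v
    rw [sub_mulVec, one_mulVec, dotProduct_sub, ← mulVec_mulVec, dotProduct_mulVec,
      ← star_mulVec, my_dot_star_self, my_dot_star_self, Complex.ofReal_sub]
  constructor
  · intro hpd v hv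
    have := hpd.dotProduct_mulVec_pos hv
    rw [hform] at this
    have : (0:ℝ) < (∑ i, Complex.normSq (v i)) - ∑ i, Complex.normSq ((A *ᵥ v) i) := by
      exact_mod_cast this
    linarith
  · intro h
    refine Matrix.PosDef.of_dotProduct_mulVec_pos hherm fun v hv => ?_
    rw [hform]
    exact_mod_cast sub_pos.mpr (h v hv)

open Matrix in
lemma my_siegel_iff {p q : ℕ} (z : Matrix (Fin p) (Fin q) ℂ) :
    (1 - z * zᴴ).PosDef ↔
      ∀ v : Fin q → ℂ, v ≠ 0 →
        ∑ i, Complex.normSq ((z *ᵥ v) i) < ∑ i, Complex.normSq (v i) := by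
  have h1 : (1 - z * zᴴ).PosDef ↔ ∀ x : Fin p → ℂ, x ≠ 0 →
      ∑ i, Complex.normSq ((zᴴ *ᵥ x) i) < ∑ i, Complex.normSq (x i) := by
    have := my_posdef_iff zᴴ
    rwa [conjTranspose_conjTranspose] at this
  rw [h1]
  constructor
  · intro h
    have := my_transfer zᴴ h
    rwa [conjTranspose_conjTranspose] at this
  · exact my_transfer z

/-- With `W = L ⊗_K ℂ`, `x` the image of a `K`-basis in which the Hermitian
form `H` has Gram matrix `E_{n,r−n}`, and `α` the surjection determined by the matrix
`z`: the restriction of `−H` to `Ker α` is positive definite iff `Eₙ − z z̄ᵗ` is positive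
definite Hermitian, i.e. iff `z` lies in the Siegel domain `H³_{n,r−n}`. -/
theorem neg_form_posdef_iff_siegel
    (n m : ℕ) (W : Type*) [AddCommGroup W] [Module ℂ W]
    (x : Module.Basis (Fin n ⊕ Fin m) ℂ W)
    (H : W → W → ℂ)
    (Hadd : ∀ u v w : W, H (u + v) w = H u w + H v w)
    (Hsmul : ∀ (c : ℂ) (v w : W), H (c • v) w = c * H v w)
    (Hherm : ∀ v w : W, H w v = (starRingEnd ℂ) (H v w))
    (hgram : ∀ a a', H (x a) (x a') =
      if a = a' then Sum.elim (fun _ => (1 : ℂ)) (fun _ => (-1 : ℂ)) a else 0)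
    (α : W →ₗ[ℂ] (Fin n → ℂ)) (hα : Function.Surjective α)
    (z : Matrix (Fin n) (Fin m) ℂ)
    (hz : ∀ i : Fin m, α (x (Sum.inr i)) = ∑ k : Fin n, z k i • α (x (Sum.inl k)))
    (hbasis : LinearIndependent ℂ (fun k : Fin n => α (x (Sum.inl k)))) :
    (∀ v ∈ LinearMap.ker α, v ≠ 0 → 0 < (-(H v v)).re) ↔
      (1 - z * z.conjTranspose).PosDef := by
  classical
  -- basic properties of H
  have Hzero : ∀ w : W, H 0 w = 0 := by
    intro w
    have := Hsmul 0 w w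
    simpa using this
  have Hsum : ∀ {ι : Type} (s : Finset ι) (f : ι → W) (w : W),
      H (∑ i ∈ s, f i) w = ∑ i ∈ s, H (f i) w := by
    intro ι s f w
    induction s using Finset.induction_on with
    | empty => simpa using Hzero w
    | insert _ _ hnot ih => rw [Finset.sum_insert hnot, Finset.sum_insert hnot, Hadd, ih]
  have Hsmul2 : ∀ (c : ℂ) (v w : W), H w (c • v) = (starRingEnd ℂ) c * H w v := by
    intro c v w
    rw [Hherm, Hsmul, map_mul, ← Hherm]
  have Hsum2 : ∀ {ι : Type} (s : Finset ι) (f : ι → W) (w : W),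
      H w (∑ i ∈ s, f i) = ∑ i ∈ s, H w (f i) := by
    intro ι s f w
    rw [Hherm, Hsum, map_sum]
    exact Finset.sum_congr rfl fun i _ => (Hherm _ _).symm
  -- quadratic form of H in coordinates
  have hHvv : ∀ v : W, H v v =
      (((∑ k, Complex.normSq (x.repr v (Sum.inl k))) -
        ∑ i, Complex.normSq (x.repr v (Sum.inr i)) : ℝ) : ℂ) := by
    intro v
    conv_lhs => rw [← x.sum_repr v]
    rw [Hsum]
    have hterm : ∀ a, H (x.repr v a • x a) (∑ b, x.repr v b • x b) =
        x.repr v a * ((starRingEnd ℂ) (x.repr v a) *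
          Sum.elim (fun _ => (1 : ℂ)) (fun _ => (-1 : ℂ)) a) := by
      intro a
      rw [Hsmul, Hsum2]
      congr 1
      have : ∀ b, H (x a) (x.repr v b • x b) =
          if a = b then (starRingEnd ℂ) (x.repr v b) *
            Sum.elim (fun _ => (1 : ℂ)) (fun _ => (-1 : ℂ)) a else 0 := by
        intro b
        rw [Hsmul2, hgram]
        split <;> simp
      rw [Finset.sum_congr rfl fun b _ => this b, Finset.sum_ite_eq]
      simp
    rw [Finset.sum_congr rfl fun a _ => hterm a, Fintype.sum_sum_type]
    simp only [Sum.elim_inl, Sum.elim_inr, mul_one, mul_neg_one, mul_neg, Complex.mul_conj]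
    push_cast [Finset.sum_neg_distrib]
    ring
  -- kernel characterization
  have hav : ∀ v : W, α v = ∑ k, (x.repr v (Sum.inl k) +
      ∑ i, z k i * x.repr v (Sum.inr i)) • α (x (Sum.inl k)) := by
    intro v
    conv_lhs => rw [← x.sum_repr v]
    rw [map_sum]
    simp only [map_smul]
    rw [Fintype.sum_sum_type]
    simp only [hz, Finset.smul_sum]
    rw [Finset.sum_comm]
    simp only [add_smul, Finset.sum_add_distrib]
    congr 1
    refine Finset.sum_congr rfl fun k _ => ?_
    rw [Finset.sum_smul]
    exact Finset.sum_congr rfl fun i _ => by rw [smul_smul, mul_comm]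
  have hker : ∀ v : W, v ∈ LinearMap.ker α ↔
      ∀ k, x.repr v (Sum.inl k) = -∑ i, z k i * x.repr v (Sum.inr i) := by
    intro v
    rw [LinearMap.mem_ker]
    constructor
    · intro h k
      rw [hav] at h
      have := Fintype.linearIndependent_iff.mp hbasis
        (fun k => x.repr v (Sum.inl k) + ∑ i, z k i * x.repr v (Sum.inr i)) h k
      linear_combination this
    · intro h
      rw [hav]
      refine Finset.sum_eq_zero fun k _ => ?_
      rw [h k]
      simp
  rw [my_siegel_iff]
  constructor
  · -- positivity on the kernel implies the Siegel condition
    intro hpos b hb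
    set c : Fin n ⊕ Fin m → ℂ := Sum.elim (fun k => -∑ i, z k i * b i) b with hc
    have hrepr : ∀ a, x.repr (∑ a', c a' • x a') a = c a :=
      fun a => congrFun (x.repr_sum_self c) a
    set v : W := ∑ a', c a' • x a' with hv
    have hvker : v ∈ LinearMap.ker α := by
      rw [hker]
      intro k
      rw [hrepr (Sum.inl k)]
      simp only [hc, Sum.elim_inl, Sum.elim_inr, neg_inj]
      exact Finset.sum_congr rfl fun i _ => by rw [hrepr (Sum.inr i)]; simp [hc]
    have hvne : v ≠ 0 := by
      intro h0
      apply hb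
      funext i
      have h1 := hrepr (Sum.inr i)
      rw [h0] at h1
      simp only [map_zero, Finsupp.coe_zero, Pi.zero_apply] at h1
      simpa [hc] using h1.symm
    have hmain := hpos v hvker hvne
    rw [hHvv v] at hmain
    have key1 : (∑ k, Complex.normSq (x.repr v (Sum.inl k)))
        = ∑ k, Complex.normSq (z.mulVec b k) := by
      refine Finset.sum_congr rfl fun k _ => ?_
      rw [hrepr (Sum.inl k)]
      simp [hc, Matrix.mulVec, dotProduct, Complex.normSq_neg]
    have key2 : (∑ i, Complex.normSq (x.repr v (Sum.inr i)))
        = ∑ i, Complex.normSq (b i) := by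
      refine Finset.sum_congr rfl fun i _ => ?_
      rw [hrepr (Sum.inr i)]
      simp [hc]
    rw [key1, key2] at hmain
    simp only [Complex.neg_re, Complex.ofReal_re] at hmain
    linarith
  · -- the Siegel condition implies positivity on the kernel
    intro hcontr v hvker hvne
    have hinl := (hker v).mp hvker
    set b : Fin m → ℂ := fun i => x.repr v (Sum.inr i) with hb
    have hbne : b ≠ 0 := by
      intro h0
      apply hvne
      have hz0 : ∀ a, x.repr v a = 0 := by
        intro a
        cases a with
        | inl k =>
          rw [hinl k]
          have : ∀ i, x.repr v (Sum.inr i) = 0 := fun i => congrFun h0 i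
          simp [this]
        | inr i => exact congrFun h0 i
      calc v = ∑ a, x.repr v a • x a := (x.sum_repr v).symm
        _ = 0 := Finset.sum_eq_zero fun a _ => by rw [hz0 a, zero_smul]
    have hlt := hcontr b hbne
    rw [hHvv v]
    have key1 : (∑ k, Complex.normSq (x.repr v (Sum.inl k)))
        = ∑ k, Complex.normSq (z.mulVec b k) := by
      refine Finset.sum_congr rfl fun k _ => ?_
      rw [hinl k]
      simp [Matrix.mulVec, dotProduct, Complex.normSq_neg, hb]
    have key2 : (∑ i, Complex.normSq (x.repr v (Sum.inr i)))
        = ∑ i, Complex.normSq (b i) := rfl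
    rw [key1, key2]
    simp only [Complex.neg_re, Complex.ofReal_re]
    linarith
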